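/- arXiv:2405.08361 — 4 statements merged into one kernel-verified Lean document; each statement's English description precedes it below -/
import Mathlib

section
/- Let (C, J) and (D, K) be sites and let F : C → D be a functor which is fully faithful, continuous (composition with F^op carries K-sheaves of types to J-sheaves of types; this holds e.g. when F sends covering families to covering families and preserves the relevant pullbacks), and cocontinuous (for every X in C and every K-covering sieve S of F(X), the sieve of morphisms g : Y → X with F(g) ∈ S is a J-covering sieve of X). Assume J is subcanonical (every representable presheaf on C is a J-sheaf). Then the functor F_# : Sh(C, J) → Sh(D, K), defined as the left adjoint of the restriction functor F^* : Sh(D, K) → Sh(C, J) given by precomposition with F (i.e., F_# is the sheafification of the left Kan extension along F^op), is fully faithful. -/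
/-!
STATEMENT 1: If `F : (C, J) ⥤ (D, K)` is a fully faithful, continuous and
cocontinuous functor of sites, and `J` is subcanonical, then the left adjoint
`F_#` of the restriction functor `F^* : Sh(D, K) ⥤ Sh(C, J)` (given by
precomposition with `F`) is fully faithful.
-/

open CategoryTheory CategoryTheory.Limits

universe u

theorem sheafPullback_fullyFaithful_of_fullyFaithful_continuous_cocontinuous
    {C : Type u} [SmallCategory C] {D : Type u} [SmallCategory D]
    (J : GrothendieckTopology C) (K : GrothendieckTopology D)
    (F : C ⥤ D) [F.Full] [F.Faithful]
    [F.IsContinuous J K] [F.IsCocontinuous J K]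
    [J.Subcanonical]
    (Fsharp : Sheaf J (Type u) ⥤ Sheaf K (Type u))
    (adj : Fsharp ⊣ F.sheafPushforwardContinuous (Type u) J K) :
    Fsharp.Full ∧ Fsharp.Faithful := by
  let adj₂ := F.sheafAdjunctionCocontinuous (Type u) J K
  have hcounit : IsIso adj₂.counit := by
    suffices ∀ (P : Sheaf J (Type u)), IsIso (adj₂.counit.app P) from
      NatIso.isIso_of_isIso_app _
    intro P
    have : IsIso ((sheafToPresheaf J (Type u)).map (adj₂.counit.app P)) := by
      change IsIso (adj₂.counit.app P).hom
      rw [F.sheafAdjunctionCocontinuous_counit_app_hom (Type u) J K P]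
      exact (inferInstance : IsIso ((F.op.ranAdjunction (Type u)).counit.app P.obj))
    exact isIso_of_reflects_iso _ (sheafToPresheaf J (Type u))
  have hunit : IsIso adj.unit := ((Adjunction.Triple.mk adj adj₂).isIso_unit_iff_isIso_counit).mpr hcounit
  have ff : Fsharp.FullyFaithful := adj.fullyFaithfulLOfIsIsoUnit
  exact ⟨ff.full, ff.faithful⟩
end

section
/- Let C be a category with pullbacks, finite coproducts, and colimits of simplicial objects (colimits indexed by Δ^op), and let J be a subcanonical Grothendieck topology on C generated by a pretopology τ. Assume: (1) every τ-covering family admits a finite subfamily which is again a τ-covering family; (2) for every finite family {U_i} of objects of C, the canonical morphism ∐_i yU_i → y(∐_i U_i) is an isomorphism in Sh(C, J); (3) for every τ-covering family {U_i → X}, writing U = ∐_i U_i and letting U_• → X be the Čech nerve of U → X in C (so U_n is the (n+1)-fold fibre product of U over X), the following co-cartesian descent condition holds: for every simplicial object Y_• of C equipped with a morphism Y_• → U_• which is co-cartesian (meaning that for every map [m] → [n] in Δ the induced morphism Y_m → Y_n ×_{U_n} U_m is an isomorphism), the canonical morphism |Y_•| ×_X U_n → Y_n is an isomorphism for every n,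 where |Y_•| denotes the colimit of Y_• over Δ^op. Then representable sheaves are closed under τ-descent: for every sheaf of types F on (C, J), every object X of C, every morphism F → yX in Sh(C, J), and every τ-covering family {U_i → X} such that each pullback F ×_{yX} yU_i in Sh(C, J) is representable, the sheaf F itself is representable. -/
open CategoryTheory CategoryTheory.Limits Opposite

universe u

instance sheafType_hasColimitsOfShape_discrete {C : Type u} [SmallCategory C]
    (J : GrothendieckTopology C) (ι : Type u) [Finite ι] :
    HasColimitsOfShape (Discrete ι) (Sheaf J (Type u)) :=
  @Sheaf.instHasColimitsOfShape C _ J (Type u) _ (Discrete ι) _ inferInstance inferInstance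

namespace CechDescentAux

set_option linter.unusedSectionVars false

section Generic

lemma sigma_desc_iso' {D : Type*} [Category D] [FinitaryPreExtensive D] [HasPullbacks D]
    {α : Type u} [Finite α] {X : D} {Z : α → D} (π : (a : α) → Z a ⟶ X) {Y : D} (f : Y ⟶ X)
    (hπ : IsIso (Limits.Sigma.desc π)) :
    IsIso (Limits.Sigma.desc ((fun _ ↦ pullback.fst _ _) : (a : α) → pullback f (π a) ⟶ _)) := by
  suffices IsColimit (Cofan.mk _ ((fun _ ↦ pullback.fst _ _) : (a : α) → pullback f (π a) ⟶ _)) by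
    change IsIso (this.coconePointUniqueUpToIso (getColimitCocone _).2).inv
    infer_instance
  let this : IsColimit (Cofan.mk X π) := by
    refine @IsColimit.ofPointIso (t := Cofan.mk X π) (P := coproductIsCoproduct Z) (i := ?_)
    convert hπ
    · rfl
    · rfl
    · apply Limits.Sigma.hom_ext
      intro j
      simp [coproductIsCoproduct]
  refine (FinitaryPreExtensive.isUniversal_finiteCoproducts this
    (Cofan.mk _ ((fun _ ↦ pullback.fst _ _) : (a : α) → pullback f (π a) ⟶ _))
    (Discrete.natTrans fun i ↦ pullback.snd _ _) f ?_
    (NatTrans.equifibered_of_discrete _) ?_).some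
  · ext
    simp [pullback.condition]
  · exact fun j ↦ IsPullback.of_hasPullback f (π j.as)

end Generic

variable {C : Type u} [SmallCategory C] [HasFiniteWidePullbacks C] [HasFiniteCoproducts C]
  [HasColimitsOfShape SimplexCategoryᵒᵖ C]
  (K : Pretopology C) [(K.toGrothendieck).Subcanonical]

/-- The Yoneda embedding into sheaves, abbreviated. -/
noncomputable abbrev ySh : C ⥤ Sheaf (K.toGrothendieck) (Type u) :=
  (K.toGrothendieck).yoneda

lemma yPreservesPB : PreservesLimitsOfSize.{0, 0} (ySh K) := by
  haveI : PreservesLimitsOfSize.{0, 0}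
      ((K.toGrothendieck).yoneda ⋙ sheafToPresheaf _ (Type u)) :=
    preservesLimits_of_natIso ((K.toGrothendieck).yonedaCompSheafToPresheaf).symm
  exact preservesLimits_of_reflects_of_preserves _ (sheafToPresheaf _ (Type u))

lemma yReflects : ReflectsLimitsOfSize.{0, 0} (ySh K) :=
  fullyFaithful_reflectsLimits _

section Constr

variable {F : Sheaf (K.toGrothendieck) (Type u)} {X : C}
  {ι : Type u} [Finite ι] {U : ι → C} {W₀ : C}

/-- Representability of the base pullback `F ×_{yX} y(∐ U)`. -/
lemma exists_brep (φ : F ⟶ (ySh K).obj X) (f : ∀ i, U i ⟶ X)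
    (hrep : ∀ i, ∃ W : C, Nonempty ((pullback φ ((ySh K).map (f i))) ≅ (ySh K).obj W))
    (hcoprodAll : ∀ (V : ι → C), IsIso (Limits.Sigma.desc (fun i => (ySh K).map (Sigma.ι V i)))) :
    ∃ (W₀ : C) (e : W₀ ⟶ ∐ U) (b : (ySh K).obj W₀ ⟶ F),
      IsPullback b ((ySh K).map e) φ ((ySh K).map (Limits.Sigma.desc f)) := by
  classical
  -- choose representing objects
  have hrep' : ∀ i, ∃ W : C, Nonempty ((ySh K).obj W ≅ pullback φ ((ySh K).map (f i))) :=
    fun i => ⟨(hrep i).choose, ⟨(hrep i).choose_spec.some.symm⟩⟩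
  choose W κ using hrep'
  set h : (∐ U) ⟶ X := Limits.Sigma.desc f with hh
  -- the big pasted squares
  have big : ∀ i, IsPullback
      (pullback.fst (pullback.snd φ ((ySh K).map h)) ((ySh K).map (Sigma.ι U i)) ≫
        pullback.fst φ ((ySh K).map h))
      (pullback.snd (pullback.snd φ ((ySh K).map h)) ((ySh K).map (Sigma.ι U i)))
      φ ((ySh K).map (f i)) := by
    intro i
    have h1 := IsPullback.of_hasPullback (pullback.snd φ ((ySh K).map h))
      ((ySh K).map (Sigma.ι U i))
    have h2 := IsPullback.of_hasPullback φ ((ySh K).map h)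
    have := h1.paste_horiz h2
    rwa [← Functor.map_comp, Sigma.ι_desc] at this
  -- universality of coproducts in the sheaf category
  have hd : IsIso (Limits.Sigma.desc ((fun i ↦ pullback.fst _ _) :
      (i : ι) → pullback (pullback.snd φ ((ySh K).map h)) ((ySh K).map (Sigma.ι U i)) ⟶ _)) :=
    sigma_desc_iso' (fun i => (ySh K).map (Sigma.ι U i)) (pullback.snd φ ((ySh K).map h))
      (hcoprodAll U)
  -- assemble the iso `y(∐ W) ≅ pullback φ (y h)`
  have hcW : IsIso (Limits.Sigma.desc (fun i => (ySh K).map (Sigma.ι W i))) := hcoprodAll W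
  let mIso : (∐ fun i => (ySh K).obj (W i)) ≅
      (∐ fun i => pullback (pullback.snd φ ((ySh K).map h)) ((ySh K).map (Sigma.ι U i))) :=
    Sigma.mapIso (fun i => (κ i).some ≪≫ (big i).isoPullback.symm)
  let Θ : (ySh K).obj (∐ W) ⟶ pullback φ ((ySh K).map h) :=
    inv (Limits.Sigma.desc (fun i => (ySh K).map (Sigma.ι W i))) ≫ mIso.hom ≫
      Limits.Sigma.desc ((fun i ↦ pullback.fst _ _) :
        (i : ι) → pullback (pullback.snd φ ((ySh K).map h)) ((ySh K).map (Sigma.ι U i)) ⟶ _)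
  have hΘ : IsIso Θ := by
    dsimp only [Θ]
    infer_instance
  refine ⟨∐ W, (K.toGrothendieck).yonedaFullyFaithful.preimage
      (Θ ≫ pullback.snd φ ((ySh K).map h)), Θ ≫ pullback.fst φ ((ySh K).map h), ?_⟩
  rw [Functor.FullyFaithful.map_preimage]
  exact IsPullback.of_iso_pullback
    ⟨by simp [Category.assoc, pullback.condition]⟩ (asIso Θ) (by simp [asIso]) (by simp [asIso])

end Constr

section Core

variable {F : Sheaf (K.toGrothendieck) (Type u)} {X : C}
  {ι : Type u} [Finite ι] {U : ι → C} {W₀ : C}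
  {φ : F ⟶ (ySh K).obj X} {f : ∀ i, U i ⟶ X} {e : W₀ ⟶ ∐ U} {b : (ySh K).obj W₀ ⟶ F}

/-- The Čech nerve of the total morphism. -/
noncomputable abbrev GG (f : ∀ i, U i ⟶ X) : SimplicialObject C :=
  (Arrow.mk (Limits.Sigma.desc f : (∐ U) ⟶ X)).cechNerve

/-- The 0-th wide pullback projection. -/
noncomputable abbrev prU (f : ∀ i, U i ⟶ X) (n : SimplexCategoryᵒᵖ) :
    (GG f).obj n ⟶ ∐ U :=
  WidePullback.π _ 0

/-- The augmentation. -/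
noncomputable abbrev bs (f : ∀ i, U i ⟶ X) (n : SimplexCategoryᵒᵖ) : (GG f).obj n ⟶ X :=
  WidePullback.base _

lemma Gmap_bs {m n : SimplexCategoryᵒᵖ} (α : m ⟶ n) :
    (GG f).map α ≫ bs f n = bs f m := by
  simp [GG, bs]
  rw [WidePullback.lift_base]

lemma Gmap_π {m n : SimplexCategoryᵒᵖ} (α : m ⟶ n) (i : Fin (n.unop.len + 1)) :
    (GG f).map α ≫ WidePullback.π _ i = WidePullback.π _ (α.unop.toOrderHom i) := by
  simp [GG]
  rw [WidePullback.lift_π]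


/-- Levelwise representing objects of `F ×_{yX} y(Gₙ)`. -/
noncomputable abbrev Ydef (brep : IsPullback b ((ySh K).map e) φ ((ySh K).map (Limits.Sigma.desc f))) (n : SimplexCategoryᵒᵖ) : C := pullback e (prU f n)

noncomputable abbrev prY (brep : IsPullback b ((ySh K).map e) φ ((ySh K).map (Limits.Sigma.desc f))) (n : SimplexCategoryᵒᵖ) : Ydef K brep n ⟶ (GG f).obj n :=
  pullback.snd _ _

noncomputable abbrev wY (brep : IsPullback b ((ySh K).map e) φ ((ySh K).map (Limits.Sigma.desc f))) (n : SimplexCategoryᵒᵖ) : Ydef K brep n ⟶ W₀ := pullback.fst _ _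

noncomputable abbrev aY (brep : IsPullback b ((ySh K).map e) φ ((ySh K).map (Limits.Sigma.desc f))) (n : SimplexCategoryᵒᵖ) : (ySh K).obj (Ydef K brep n) ⟶ F :=
  (ySh K).map (wY K brep n) ≫ b

lemma sqY (brep : IsPullback b ((ySh K).map e) φ ((ySh K).map (Limits.Sigma.desc f))) (n : SimplexCategoryᵒᵖ) :
    IsPullback (aY K brep n) ((ySh K).map (prY K brep n)) φ ((ySh K).map (bs f n)) := by
  haveI := yPreservesPB K
  have h1 : IsPullback ((ySh K).map (wY K brep n)) ((ySh K).map (prY K brep n))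
      ((ySh K).map e) ((ySh K).map (prU f n)) :=
    (IsPullback.of_hasPullback e (prU f n)).map (ySh K)
  have h2 := h1.paste_horiz brep
  have h3 : prU f n ≫ Limits.Sigma.desc f = bs f n := WidePullback.π_arrow _ _
  rw [← Functor.map_comp] at h2
  rwa [h3] at h2

/-- The `F`-component of a morphism into `Ydef`. -/
noncomputable def Fc (brep : IsPullback b ((ySh K).map e) φ ((ySh K).map (Limits.Sigma.desc f))) (n : SimplexCategoryᵒᵖ) {V : C} (s : V ⟶ Ydef K brep n) :
    F.val.obj (op V) :=
  (aY K brep n).hom.app (op V) s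

lemma Fc_eq (brep : IsPullback b ((ySh K).map e) φ ((ySh K).map (Limits.Sigma.desc f))) (n : SimplexCategoryᵒᵖ) {V : C} (s : V ⟶ Ydef K brep n) :
    Fc K brep n s = (K.toGrothendieck).yonedaEquiv ((ySh K).map s ≫ aY K brep n) := by
  rw [GrothendieckTopology.yonedaEquiv_comp, GrothendieckTopology.yonedaEquiv_yoneda_map]
  rfl

lemma Fc_natural (brep : IsPullback b ((ySh K).map e) φ ((ySh K).map (Limits.Sigma.desc f))) (n : SimplexCategoryᵒᵖ) {V V' : C} (r : V' ⟶ V) (s : V ⟶ Ydef K brep n) :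
    Fc K brep n (r ≫ s) = F.val.map r.op (Fc K brep n s) := by
  have h := ConcreteCategory.congr_hom ((aY K brep n).hom.naturality r.op) s
  simpa [Fc] using h

lemma phi_Fc (brep : IsPullback b ((ySh K).map e) φ ((ySh K).map (Limits.Sigma.desc f))) (n : SimplexCategoryᵒᵖ) {V : C} (s : V ⟶ Ydef K brep n) :
    φ.hom.app (op V) (Fc K brep n s) = s ≫ prY K brep n ≫ bs f n := by
  have := ConcreteCategory.congr_hom (congr_arg (fun (ψ : (ySh K).obj (Ydef K brep n) ⟶ (ySh K).obj X) =>
    ψ.hom.app (op V)) (sqY K brep n).w) s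
  simpa [Fc] using this

lemma hextF (brep : IsPullback b ((ySh K).map e) φ ((ySh K).map (Limits.Sigma.desc f))) (n : SimplexCategoryᵒᵖ) {V : C} {s s' : V ⟶ Ydef K brep n}
    (h1 : s ≫ prY K brep n = s' ≫ prY K brep n) (h2 : Fc K brep n s = Fc K brep n s') :
    s = s' := by
  apply (ySh K).map_injective
  apply (sqY K brep n).hom_ext
  · apply ((K.toGrothendieck).yonedaEquiv).injective
    rw [GrothendieckTopology.yonedaEquiv_comp, GrothendieckTopology.yonedaEquiv_comp,
      GrothendieckTopology.yonedaEquiv_yoneda_map, GrothendieckTopology.yonedaEquiv_yoneda_map]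
    exact h2
  · rw [← Functor.map_comp, ← Functor.map_comp, h1]

/-- Section of `Ydef` from an element of `F` and a compatible map into the nerve. -/
noncomputable def sect (brep : IsPullback b ((ySh K).map e) φ ((ySh K).map (Limits.Sigma.desc f))) (n : SimplexCategoryᵒᵖ) {V : C} (t : F.val.obj (op V))
    (z : V ⟶ (GG f).obj n) (hc : φ.hom.app (op V) t = z ≫ bs f n) : V ⟶ Ydef K brep n :=
  (K.toGrothendieck).yonedaFullyFaithful.preimage
    ((sqY K brep n).lift ((K.toGrothendieck).yonedaEquiv.symm t) ((ySh K).map z) (by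
      apply ((K.toGrothendieck).yonedaEquiv).injective
      rw [GrothendieckTopology.yonedaEquiv_comp, GrothendieckTopology.yonedaEquiv_comp,
        GrothendieckTopology.yonedaEquiv_yoneda_map, Equiv.apply_symm_apply, hc]
      rfl))

lemma sect_pr (brep : IsPullback b ((ySh K).map e) φ ((ySh K).map (Limits.Sigma.desc f))) (n : SimplexCategoryᵒᵖ) {V : C} (t : F.val.obj (op V))
    (z : V ⟶ (GG f).obj n) (hc : φ.hom.app (op V) t = z ≫ bs f n) :
    sect K brep n t z hc ≫ prY K brep n = z := by
  apply (ySh K).map_injective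
  rw [Functor.map_comp, sect, Functor.FullyFaithful.map_preimage, IsPullback.lift_snd]

lemma sect_Fc (brep : IsPullback b ((ySh K).map e) φ ((ySh K).map (Limits.Sigma.desc f))) (n : SimplexCategoryᵒᵖ) {V : C} (t : F.val.obj (op V))
    (z : V ⟶ (GG f).obj n) (hc : φ.hom.app (op V) t = z ≫ bs f n) :
    Fc K brep n (sect K brep n t z hc) = t := by
  rw [Fc_eq, sect, Functor.FullyFaithful.map_preimage, IsPullback.lift_fst,
    Equiv.apply_symm_apply]

/-- The simplicial structure maps. -/
noncomputable def Ymap (brep : IsPullback b ((ySh K).map e) φ ((ySh K).map (Limits.Sigma.desc f))) {m n : SimplexCategoryᵒᵖ} (α : m ⟶ n) :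
    Ydef K brep m ⟶ Ydef K brep n :=
  (K.toGrothendieck).yonedaFullyFaithful.preimage
    ((sqY K brep n).lift (aY K brep m) ((ySh K).map (prY K brep m ≫ (GG f).map α)) (by
      have h4 : (prY K brep m ≫ (GG f).map α) ≫ bs f n = prY K brep m ≫ bs f m := by
        rw [Category.assoc, Gmap_bs]
      rw [← Functor.map_comp, h4, Functor.map_comp]
      exact (sqY K brep m).w))

lemma Ymap_pr (brep : IsPullback b ((ySh K).map e) φ ((ySh K).map (Limits.Sigma.desc f))) {m n : SimplexCategoryᵒᵖ} (α : m ⟶ n) :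
    Ymap K brep α ≫ prY K brep n = prY K brep m ≫ (GG f).map α := by
  apply (ySh K).map_injective
  rw [Functor.map_comp, Ymap, Functor.FullyFaithful.map_preimage, IsPullback.lift_snd]

lemma Ymap_a (brep : IsPullback b ((ySh K).map e) φ ((ySh K).map (Limits.Sigma.desc f))) {m n : SimplexCategoryᵒᵖ} (α : m ⟶ n) :
    (ySh K).map (Ymap K brep α) ≫ aY K brep n = aY K brep m := by
  rw [Ymap, Functor.FullyFaithful.map_preimage, IsPullback.lift_fst]

lemma Fc_Ymap (brep : IsPullback b ((ySh K).map e) φ ((ySh K).map (Limits.Sigma.desc f))) {m n : SimplexCategoryᵒᵖ} (α : m ⟶ n) {V : C} (s : V ⟶ Ydef K brep m) :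
    Fc K brep n (s ≫ Ymap K brep α) = Fc K brep m s := by
  rw [Fc_eq, Fc_eq, Functor.map_comp, Category.assoc, Ymap_a]

/-- The simplicial object `Y`. -/
noncomputable abbrev Yobj (brep : IsPullback b ((ySh K).map e) φ ((ySh K).map (Limits.Sigma.desc f))) : SimplicialObject C where
  obj n := Ydef K brep n
  map α := Ymap K brep α
  map_id n := by
    have : Ymap K brep (𝟙 n) = 𝟙 (Ydef K brep n) := by
      apply hextF K brep
      · rw [Ymap_pr, CategoryTheory.Functor.map_id, Category.comp_id, Category.id_comp]
      · have := Fc_Ymap K brep (𝟙 n) (s := 𝟙 (Ydef K brep n))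
        rw [Category.id_comp] at this
        rw [this]
    exact this
  map_comp {l m n} α β := by
    have : Ymap K brep (α ≫ β) = Ymap K brep α ≫ Ymap K brep β := by
      apply hextF K brep
      · have hL : Ymap K brep (α ≫ β) ≫ prY K brep n =
            prY K brep l ≫ (GG f).map (α ≫ β) := Ymap_pr K brep _
        have hR : (Ymap K brep α ≫ Ymap K brep β) ≫ prY K brep n =
            prY K brep l ≫ (GG f).map (α ≫ β) := by
          rw [Category.assoc, Ymap_pr, ← Category.assoc, Ymap_pr, Category.assoc,
            ← Functor.map_comp]
        rw [hL, hR]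
      · have h1 := Fc_Ymap K brep (α ≫ β) (s := 𝟙 (Ydef K brep l))
        rw [Category.id_comp] at h1
        have h2 := Fc_Ymap K brep β (s := Ymap K brep α)
        have h3 := Fc_Ymap K brep α (s := 𝟙 (Ydef K brep l))
        rw [Category.id_comp] at h3
        rw [h1, h2, h3]
    exact this

lemma cocart (brep : IsPullback b ((ySh K).map e) φ ((ySh K).map (Limits.Sigma.desc f))) {m n : SimplexCategoryᵒᵖ} (α : m ⟶ n) :
    IsPullback ((Yobj K brep).map α) (prY K brep m) (prY K brep n) ((GG f).map α) := by
  haveI := yReflects K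
  show IsPullback (Ymap K brep α) _ _ _
  apply IsPullback.of_map (ySh K) (Ymap_pr K brep α)
  refine IsPullback.of_right ?_ ?_ (sqY K brep n)
  · rw [Ymap_a]
    rw [← Functor.map_comp, Gmap_bs]
    exact sqY K brep m
  · rw [← Functor.map_comp, Ymap_pr, Functor.map_comp]

/-- The morphism of simplicial objects `Y ⟶ G`. -/
noncomputable def pY (brep : IsPullback b ((ySh K).map e) φ ((ySh K).map (Limits.Sigma.desc f))) : Yobj K brep ⟶ GG f where
  app n := prY K brep n
  naturality m n α := Ymap_pr K brep α

/-- The augmentation of the colimit. -/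
noncomputable def qc (brep : IsPullback b ((ySh K).map e) φ ((ySh K).map (Limits.Sigma.desc f))) : colimit (Yobj K brep) ⟶ X :=
  colimit.desc _
    { pt := X
      ι :=
        { app := fun n => prY K brep n ≫ bs f n
          naturality := fun m n α => by
            dsimp [Yobj]
            rw [Category.comp_id, ← Category.assoc, Ymap_pr, Category.assoc, Gmap_bs] } }

lemma colι_qc (brep : IsPullback b ((ySh K).map e) φ ((ySh K).map (Limits.Sigma.desc f))) (n : SimplexCategoryᵒᵖ) :
    colimit.ι (Yobj K brep) n ≫ qc K brep = prY K brep n ≫ bs f n :=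
  colimit.ι_desc _ _

/-- Simplex objects. -/
abbrev nn (k : ℕ) : SimplexCategoryᵒᵖ := op (SimplexCategory.mk k)

/-- The two "vertex" maps `[0] ⟶ [1]`, in the opposite category. -/
abbrev fc (j : Fin 2) : nn 1 ⟶ nn 0 :=
  (SimplexCategory.const (SimplexCategory.mk 0) (SimplexCategory.mk 1) j).op

/-- The `W`-component (composition with the colimit inclusion). -/
noncomputable abbrev Wc (brep : IsPullback b ((ySh K).map e) φ ((ySh K).map (Limits.Sigma.desc f)))
    (n : SimplexCategoryᵒᵖ) {V : C} (s : V ⟶ Ydef K brep n) : V ⟶ colimit (Yobj K brep) :=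
  s ≫ colimit.ι (Yobj K brep) n

section WithHP

variable {brep : IsPullback b ((ySh K).map e) φ ((ySh K).map (Limits.Sigma.desc f))}

lemma hextW (brep : IsPullback b ((ySh K).map e) φ ((ySh K).map (Limits.Sigma.desc f))) (HP : ∀ n, IsPullback (colimit.ι (Yobj K brep) n) (prY K brep n) (qc K brep) (bs f n)) (n : SimplexCategoryᵒᵖ) {V : C} {s s' : V ⟶ Ydef K brep n}
    (h1 : s ≫ prY K brep n = s' ≫ prY K brep n)
    (h2 : Wc K brep n s = Wc K brep n s') : s = s' :=
  (HP n).hom_ext h2 h1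

/-- Section of `Ydef` from a map to the colimit and a compatible map into the nerve. -/
noncomputable def sectW (brep : IsPullback b ((ySh K).map e) φ ((ySh K).map (Limits.Sigma.desc f))) (HP : ∀ n, IsPullback (colimit.ι (Yobj K brep) n) (prY K brep n) (qc K brep) (bs f n)) (n : SimplexCategoryᵒᵖ) {V : C} (k : V ⟶ colimit (Yobj K brep))
    (z : V ⟶ (GG f).obj n) (hc : k ≫ qc K brep = z ≫ bs f n) : V ⟶ Ydef K brep n :=
  (HP n).lift k z hc

lemma sectW_colι (brep : IsPullback b ((ySh K).map e) φ ((ySh K).map (Limits.Sigma.desc f))) (HP : ∀ n, IsPullback (colimit.ι (Yobj K brep) n) (prY K brep n) (qc K brep) (bs f n)) (n : SimplexCategoryᵒᵖ) {V : C} (k : V ⟶ colimit (Yobj K brep))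
    (z : V ⟶ (GG f).obj n) (hc : k ≫ qc K brep = z ≫ bs f n) :
    Wc K brep n (sectW K brep HP n k z hc) = k :=
  (HP n).lift_fst _ _ _

lemma sectW_pr (brep : IsPullback b ((ySh K).map e) φ ((ySh K).map (Limits.Sigma.desc f))) (HP : ∀ n, IsPullback (colimit.ι (Yobj K brep) n) (prY K brep n) (qc K brep) (bs f n)) (n : SimplexCategoryᵒᵖ) {V : C} (k : V ⟶ colimit (Yobj K brep))
    (z : V ⟶ (GG f).obj n) (hc : k ≫ qc K brep = z ≫ bs f n) :
    sectW K brep HP n k z hc ≫ prY K brep n = z :=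
  (HP n).lift_snd _ _ _

/-- Key lemma: two sections of `Y₀` with the same `F`-component have the same
`W`-component. -/
lemma keyL (brep : IsPullback b ((ySh K).map e) φ ((ySh K).map (Limits.Sigma.desc f))) (HP : ∀ n, IsPullback (colimit.ι (Yobj K brep) n) (prY K brep n) (qc K brep) (bs f n)) {V : C} (s s' : V ⟶ Ydef K brep (nn 0))
    (h : Fc K brep (nn 0) s = Fc K brep (nn 0) s') :
    Wc K brep (nn 0) s = Wc K brep (nn 0) s' := by
  set t := Fc K brep (nn 0) s with ht
  have hs : Fc K brep (nn 0) s = t := rfl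
  have hs' : Fc K brep (nn 0) s' = t := h.symm
  have hbs : ∀ (sj : V ⟶ Ydef K brep (nn 0)), Fc K brep (nn 0) sj = t →
      (sj ≫ prY K brep (nn 0) ≫ prU f (nn 0)) ≫ Limits.Sigma.desc f = φ.hom.app (op V) t := by
    intro sj hj
    have harr : (prU f (nn 0) : _ ⟶ ∐ U) ≫ Limits.Sigma.desc f = bs f (nn 0) :=
      WidePullback.π_arrow _ _
    rw [Category.assoc, Category.assoc, harr, ← hj, phi_Fc]
  set v : Fin 2 → (V ⟶ ∐ U) :=
    ![s ≫ prY K brep (nn 0) ≫ prU f (nn 0),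
      s' ≫ prY K brep (nn 0) ≫ prU f (nn 0)] with hv
  have hvj : ∀ j : Fin 2, v j ≫ (fun _ => (Limits.Sigma.desc f : (∐ U) ⟶ X)) j = φ.hom.app (op V) t := by
    intro j
    fin_cases j
    · exact hbs s hs
    · exact hbs s' hs'
  set z1 : V ⟶ (GG f).obj (nn 1) := WidePullback.lift (φ.hom.app (op V) t) v hvj with hz1
  set S := sect K brep (nn 1) t z1 (WidePullback.lift_base _ _ _ _).symm with hS
  have face : ∀ (j : Fin 2) (sj : V ⟶ Ydef K brep (nn 0)), Fc K brep (nn 0) sj = t →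
      sj ≫ prY K brep (nn 0) ≫ prU f (nn 0) = v j → S ≫ Ymap K brep (fc j) = sj := by
    intro j sj hFcj hprj
    apply hextF K brep
    · rw [Category.assoc, Ymap_pr, ← Category.assoc, sect_pr]
      apply WidePullback.hom_ext
      · intro i
        have hi : i = 0 := @Subsingleton.elim (Fin 1) ⟨by omega⟩ i 0
        subst hi
        rw [Category.assoc, Gmap_π]
        have : ((fc j).unop.toOrderHom 0) = j := rfl
        rw [this, WidePullback.lift_π, ← hprj, Category.assoc]
      · rw [Category.assoc]
        have h1 : (GG f).map (fc j) ≫ WidePullback.base _ = bs f (nn 1) := Gmap_bs _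
        rw [h1]
        have h2 : z1 ≫ bs f (nn 1) = φ.hom.app (op V) t := WidePullback.lift_base _ _ _ _
        rw [h2]
        have h3 : sj ≫ prY K brep (nn 0) ≫ bs f (nn 0) = φ.hom.app (op V) t := by
          rw [← hFcj, ← phi_Fc, hFcj]
        rw [← h3, Category.assoc]
    · rw [Fc_Ymap, hS, sect_Fc, hFcj]
  have f0 : S ≫ Ymap K brep (fc 0) = s := face 0 s hs rfl
  have f1 : S ≫ Ymap K brep (fc 1) = s' := face 1 s' hs' rfl
  have w0 : Ymap K brep (fc 0) ≫ colimit.ι (Yobj K brep) (nn 0) =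
      colimit.ι (Yobj K brep) (nn 1) := colimit.w (Yobj K brep) (fc 0)
  have w1 : Ymap K brep (fc 1) ≫ colimit.ι (Yobj K brep) (nn 0) =
      colimit.ι (Yobj K brep) (nn 1) := colimit.w (Yobj K brep) (fc 1)
  show s ≫ colimit.ι (Yobj K brep) (nn 0) = s' ≫ colimit.ι (Yobj K brep) (nn 0)
  rw [← f0, ← f1, Category.assoc, Category.assoc, w0, w1]

/-- Key lemma: two sections of `Y₀` with the same `W`-component have the same
`F`-component. -/
lemma keyL' (brep : IsPullback b ((ySh K).map e) φ ((ySh K).map (Limits.Sigma.desc f))) (HP : ∀ n, IsPullback (colimit.ι (Yobj K brep) n) (prY K brep n) (qc K brep) (bs f n)) {V : C} (s s' : V ⟶ Ydef K brep (nn 0))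
    (h : Wc K brep (nn 0) s = Wc K brep (nn 0) s') :
    Fc K brep (nn 0) s = Fc K brep (nn 0) s' := by
  set k := Wc K brep (nn 0) s with hk
  have hks : Wc K brep (nn 0) s = k := rfl
  have hks' : Wc K brep (nn 0) s' = k := h.symm
  have hbs : ∀ (sj : V ⟶ Ydef K brep (nn 0)), Wc K brep (nn 0) sj = k →
      (sj ≫ prY K brep (nn 0) ≫ prU f (nn 0)) ≫ Limits.Sigma.desc f = k ≫ qc K brep := by
    intro sj hj
    have harr : (prU f (nn 0) : _ ⟶ ∐ U) ≫ Limits.Sigma.desc f = bs f (nn 0) :=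
      WidePullback.π_arrow _ _
    rw [Category.assoc, Category.assoc, harr, ← hj]
    show sj ≫ prY K brep (nn 0) ≫ bs f (nn 0) = (sj ≫ colimit.ι (Yobj K brep) (nn 0)) ≫ qc K brep
    rw [Category.assoc, colι_qc]
  set v : Fin 2 → (V ⟶ ∐ U) :=
    ![s ≫ prY K brep (nn 0) ≫ prU f (nn 0),
      s' ≫ prY K brep (nn 0) ≫ prU f (nn 0)] with hv
  have hvj : ∀ j : Fin 2, v j ≫ (fun _ => (Limits.Sigma.desc f : (∐ U) ⟶ X)) j = k ≫ qc K brep := by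
    intro j
    fin_cases j
    · exact hbs s hks
    · exact hbs s' hks'
  set z1 : V ⟶ (GG f).obj (nn 1) := WidePullback.lift (k ≫ qc K brep) v hvj with hz1
  set S := sectW K brep HP (nn 1) k z1 (WidePullback.lift_base _ _ _ _).symm with hS
  have face : ∀ (j : Fin 2) (sj : V ⟶ Ydef K brep (nn 0)), Wc K brep (nn 0) sj = k →
      sj ≫ prY K brep (nn 0) ≫ prU f (nn 0) = v j → S ≫ Ymap K brep (fc j) = sj := by
    intro j sj hWcj hprj
    apply hextW K brep HP
    · rw [Category.assoc, Ymap_pr, ← Category.assoc, sectW_pr]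
      apply WidePullback.hom_ext
      · intro i
        have hi : i = 0 := @Subsingleton.elim (Fin 1) ⟨by omega⟩ i 0
        subst hi
        rw [Category.assoc, Gmap_π]
        have : ((fc j).unop.toOrderHom 0) = j := rfl
        rw [this, WidePullback.lift_π, ← hprj, Category.assoc]
      · rw [Category.assoc]
        have h1 : (GG f).map (fc j) ≫ WidePullback.base _ = bs f (nn 1) := Gmap_bs _
        rw [h1]
        have h2 : z1 ≫ bs f (nn 1) = k ≫ qc K brep := WidePullback.lift_base _ _ _ _
        rw [h2]
        have h3 : sj ≫ prY K brep (nn 0) ≫ bs f (nn 0) = k ≫ qc K brep := by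
          rw [← hWcj]
          show sj ≫ prY K brep (nn 0) ≫ bs f (nn 0) =
            (sj ≫ colimit.ι (Yobj K brep) (nn 0)) ≫ qc K brep
          rw [Category.assoc, colι_qc]
        rw [← h3, Category.assoc]
    · have w0 : Ymap K brep (fc j) ≫ colimit.ι (Yobj K brep) (nn 0) =
          colimit.ι (Yobj K brep) (nn 1) := colimit.w (Yobj K brep) (fc j)
      show (S ≫ Ymap K brep (fc j)) ≫ colimit.ι (Yobj K brep) (nn 0) =
        sj ≫ colimit.ι (Yobj K brep) (nn 0)
      rw [Category.assoc, w0]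
      exact (sectW_colι K brep HP (nn 1) k z1 _).trans hWcj.symm
  have f0 : S ≫ Ymap K brep (fc 0) = s := face 0 s hks rfl
  have f1 : S ≫ Ymap K brep (fc 1) = s' := face 1 s' hks' rfl
  rw [← f0, ← f1, Fc_Ymap, Fc_Ymap]

lemma Wc_comp (brep : IsPullback b ((ySh K).map e) φ ((ySh K).map (Limits.Sigma.desc f)))
    (n : SimplexCategoryᵒᵖ) {V V' : C} (r : V' ⟶ V) (s : V ⟶ Ydef K brep n) :
    Wc K brep n (r ≫ s) = r ≫ Wc K brep n s :=
  Category.assoc _ _ _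

/-- Factorization sieve. -/
def SX (f : ∀ i, U i ⟶ X) {V : C} (x : V ⟶ X) : Sieve V :=
  Sieve.pullback x (Sieve.generate (Presieve.ofArrows U f))

lemma SX_mem (hcov : Presieve.ofArrows U f ∈ K X) {V : C} (x : V ⟶ X) :
    SX f x ∈ (K.toGrothendieck) V := by
  apply (K.toGrothendieck).pullback_stable
  rw [Pretopology.mem_toGrothendieck]
  exact ⟨_, hcov, Sieve.le_generate _⟩

lemma SX_fac {V Z : C} (x : V ⟶ X) {g : Z ⟶ V} (hg : (SX f x).arrows g) :
    ∃ (i : ι) (l : Z ⟶ U i), g ≫ x = l ≫ f i := by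
  obtain ⟨Y', l, m, hm, hfac⟩ := hg
  cases hm with
  | mk i => exact ⟨i, l, hfac.symm⟩

lemma phi_map {V Z : C} (φ : F ⟶ (ySh K).obj X) (g : Z ⟶ V) (t : F.val.obj (op V)) :
    φ.hom.app (op Z) (F.val.map g.op t) = g ≫ φ.hom.app (op V) t := by
  have h := ConcreteCategory.congr_hom (φ.hom.naturality g.op) t
  simpa using h

lemma ex0 (brep : IsPullback b ((ySh K).map e) φ ((ySh K).map (Limits.Sigma.desc f)))
    {Z : C} (t : F.val.obj (op Z)) (i : ι) (l : Z ⟶ U i)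
    (hl : φ.hom.app (op Z) t = l ≫ f i) :
    ∃ s : Z ⟶ Ydef K brep (nn 0), Fc K brep (nn 0) s = t := by
  have hleg : ∀ (j : Fin (SimplexCategory.len (SimplexCategory.mk 0) + 1)),
      (l ≫ Sigma.ι U i) ≫ ((fun _ => (Limits.Sigma.desc f : (∐ U) ⟶ X)) j) = φ.hom.app (op Z) t := by
    intro j
    rw [Category.assoc, Sigma.ι_desc, hl]
  refine ⟨sect K brep (nn 0) t (WidePullback.lift (φ.hom.app (op Z) t) _ hleg)
    (WidePullback.lift_base _ _ _ _).symm, sect_Fc _ _ _ _ _ _⟩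

lemma ex0' (brep : IsPullback b ((ySh K).map e) φ ((ySh K).map (Limits.Sigma.desc f)))
    {V Z : C} (t : F.val.obj (op V)) {g : Z ⟶ V}
    (hg : (SX f (φ.hom.app (op V) t)).arrows g) :
    ∃ s : Z ⟶ Ydef K brep (nn 0), Fc K brep (nn 0) s = F.val.map g.op t := by
  obtain ⟨i, l, hl⟩ := SX_fac _ hg
  exact ex0 K brep _ i l (by rw [phi_map, hl])

lemma ex0W (brep : IsPullback b ((ySh K).map e) φ ((ySh K).map (Limits.Sigma.desc f)))
    (HP : ∀ n, IsPullback (colimit.ι (Yobj K brep) n) (prY K brep n) (qc K brep) (bs f n))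
    {Z : C} (k : Z ⟶ colimit (Yobj K brep)) (i : ι) (l : Z ⟶ U i)
    (hl : k ≫ qc K brep = l ≫ f i) :
    ∃ s : Z ⟶ Ydef K brep (nn 0), Wc K brep (nn 0) s = k := by
  have hleg : ∀ (j : Fin (SimplexCategory.len (SimplexCategory.mk 0) + 1)),
      (l ≫ Sigma.ι U i) ≫ ((fun _ => (Limits.Sigma.desc f : (∐ U) ⟶ X)) j) = k ≫ qc K brep := by
    intro j
    rw [Category.assoc, Sigma.ι_desc, hl]
  refine ⟨sectW K brep HP (nn 0) k (WidePullback.lift (k ≫ qc K brep) _ hleg)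
    (WidePullback.lift_base _ _ _ _).symm, sectW_colι _ _ _ _ _ _ _⟩

lemma ex0W' (brep : IsPullback b ((ySh K).map e) φ ((ySh K).map (Limits.Sigma.desc f)))
    (HP : ∀ n, IsPullback (colimit.ι (Yobj K brep) n) (prY K brep n) (qc K brep) (bs f n))
    {V Z : C} (k : V ⟶ colimit (Yobj K brep)) {g : Z ⟶ V}
    (hg : (SX f (k ≫ qc K brep)).arrows g) :
    ∃ s : Z ⟶ Ydef K brep (nn 0), Wc K brep (nn 0) s = g ≫ k := by
  obtain ⟨i, l, hl⟩ := SX_fac _ hg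
  exact ex0W K brep HP (g ≫ k) i l (by rw [Category.assoc, hl])

section Glue

/-- The family of local sections of `W` attached to `t ∈ F(V)`. -/
noncomputable def famA (brep : IsPullback b ((ySh K).map e) φ ((ySh K).map (Limits.Sigma.desc f))) {V : C} (t : F.val.obj (op V)) :
    Presieve.FamilyOfElements ((ySh K).obj (colimit (Yobj K brep))).val
      (SX f (φ.hom.app (op V) t)).arrows :=
  fun _ g hg => Wc K brep (nn 0) (ex0' K brep t hg).choose

lemma famA_compat (brep : IsPullback b ((ySh K).map e) φ ((ySh K).map (Limits.Sigma.desc f))) (HP : ∀ n, IsPullback (colimit.ι (Yobj K brep) n) (prY K brep n) (qc K brep) (bs f n)) {V : C} (t : F.val.obj (op V)) : (famA K brep t).Compatible := by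
  intro Z₁ Z₂ Z g₁ g₂ f₁ f₂ h₁ h₂ hcomm
  have e₁ : Fc K brep (nn 0) (g₁ ≫ (ex0' K brep t h₁).choose) = F.val.map (g₁ ≫ f₁).op t := by
    rw [Fc_natural, (ex0' K brep t h₁).choose_spec, op_comp, FunctorToTypes.map_comp_apply]
  have e₂ : Fc K brep (nn 0) (g₂ ≫ (ex0' K brep t h₂).choose) = F.val.map (g₂ ≫ f₂).op t := by
    rw [Fc_natural, (ex0' K brep t h₂).choose_spec, op_comp, FunctorToTypes.map_comp_apply]
  have hkey := keyL K brep HP _ _ (e₁.trans (by rw [hcomm, ← e₂]))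
  rw [Wc_comp, Wc_comp] at hkey
  exact hkey

/-- The glued morphism `V ⟶ W` attached to `t ∈ F(V)`. -/
noncomputable def alphaEl (brep : IsPullback b ((ySh K).map e) φ ((ySh K).map (Limits.Sigma.desc f))) (HP : ∀ n, IsPullback (colimit.ι (Yobj K brep) n) (prY K brep n) (qc K brep) (bs f n)) (hcov : Presieve.ofArrows U f ∈ K X) {V : C} (t : F.val.obj (op V)) : V ⟶ colimit (Yobj K brep) :=
  (((CategoryTheory.isSheaf_iff_isSheaf_of_type _ _).mp
    ((ySh K).obj (colimit (Yobj K brep))).cond) _ (SX_mem K hcov (φ.hom.app (op V) t))).amalgamate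
    (famA K brep t) (famA_compat K brep HP t)

lemma alpha_spec (brep : IsPullback b ((ySh K).map e) φ ((ySh K).map (Limits.Sigma.desc f))) (HP : ∀ n, IsPullback (colimit.ι (Yobj K brep) n) (prY K brep n) (qc K brep) (bs f n)) (hcov : Presieve.ofArrows U f ∈ K X) {V Z : C} (t : F.val.obj (op V)) (g : Z ⟶ V)
    (hg : (SX f (φ.hom.app (op V) t)).arrows g) (s : Z ⟶ Ydef K brep (nn 0))
    (hs : Fc K brep (nn 0) s = F.val.map g.op t) :
    g ≫ alphaEl K brep HP hcov t = Wc K brep (nn 0) s := by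
  have hamal := (((CategoryTheory.isSheaf_iff_isSheaf_of_type _ _).mp
    ((ySh K).obj (colimit (Yobj K brep))).cond) _
      (SX_mem K hcov (φ.hom.app (op V) t))).valid_glue (famA_compat K brep HP t) g hg
  have h2 : famA K brep t g hg = Wc K brep (nn 0) s := by
    apply keyL K brep HP
    rw [(ex0' K brep t hg).choose_spec, hs]
  exact hamal.trans h2

lemma alpha_unique (brep : IsPullback b ((ySh K).map e) φ ((ySh K).map (Limits.Sigma.desc f))) (HP : ∀ n, IsPullback (colimit.ι (Yobj K brep) n) (prY K brep n) (qc K brep) (bs f n)) (hcov : Presieve.ofArrows U f ∈ K X) {V : C} (t : F.val.obj (op V)) (k : V ⟶ colimit (Yobj K brep))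
    (hk : ∀ {Z : C} (g : Z ⟶ V), (SX f (φ.hom.app (op V) t)).arrows g →
      ∀ (s : Z ⟶ Ydef K brep (nn 0)), Fc K brep (nn 0) s = F.val.map g.op t →
        g ≫ k = Wc K brep (nn 0) s) :
    k = alphaEl K brep HP hcov t := by
  apply (((CategoryTheory.isSheaf_iff_isSheaf_of_type _ _).mp
    ((ySh K).obj (colimit (Yobj K brep))).cond) _
      (SX_mem K hcov (φ.hom.app (op V) t))).isSeparatedFor.ext
  intro Z g hg
  obtain ⟨s0, hs0⟩ := ex0' K brep t hg
  show g ≫ k = g ≫ alphaEl K brep HP hcov t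
  rw [hk g hg s0 hs0, alpha_spec K brep HP hcov t g hg s0 hs0]

lemma phi_alpha (brep : IsPullback b ((ySh K).map e) φ ((ySh K).map (Limits.Sigma.desc f))) (HP : ∀ n, IsPullback (colimit.ι (Yobj K brep) n) (prY K brep n) (qc K brep) (bs f n)) (hcov : Presieve.ofArrows U f ∈ K X) {V : C} (t : F.val.obj (op V)) :
    alphaEl K brep HP hcov t ≫ qc K brep = φ.hom.app (op V) t := by
  apply (((CategoryTheory.isSheaf_iff_isSheaf_of_type _ _).mp
    ((ySh K).obj X).cond) _ (SX_mem K hcov (φ.hom.app (op V) t))).isSeparatedFor.ext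
  intro Z g hg
  obtain ⟨s0, hs0⟩ := ex0' K brep t hg
  show g ≫ (alphaEl K brep HP hcov t ≫ qc K brep) = g ≫ φ.hom.app (op V) t
  rw [← Category.assoc, alpha_spec K brep HP hcov t g hg s0 hs0]
  show (s0 ≫ colimit.ι (Yobj K brep) (nn 0)) ≫ qc K brep = g ≫ φ.hom.app (op V) t
  rw [Category.assoc, colι_qc, ← phi_Fc, hs0, phi_map]

/-- The family of local sections of `F` attached to `k : V ⟶ W`. -/
noncomputable def famB (brep : IsPullback b ((ySh K).map e) φ ((ySh K).map (Limits.Sigma.desc f))) (HP : ∀ n, IsPullback (colimit.ι (Yobj K brep) n) (prY K brep n) (qc K brep) (bs f n)) {V : C} (k : V ⟶ colimit (Yobj K brep)) :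
    Presieve.FamilyOfElements F.val (SX f (k ≫ qc K brep)).arrows :=
  fun _ g hg => Fc K brep (nn 0) (ex0W' K brep HP k hg).choose

lemma famB_compat (brep : IsPullback b ((ySh K).map e) φ ((ySh K).map (Limits.Sigma.desc f))) (HP : ∀ n, IsPullback (colimit.ι (Yobj K brep) n) (prY K brep n) (qc K brep) (bs f n)) {V : C} (k : V ⟶ colimit (Yobj K brep)) :
    (famB K brep HP k).Compatible := by
  intro Z₁ Z₂ Z g₁ g₂ f₁ f₂ h₁ h₂ hcomm
  show F.val.map g₁.op (Fc K brep (nn 0) (ex0W' K brep HP k h₁).choose) =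
    F.val.map g₂.op (Fc K brep (nn 0) (ex0W' K brep HP k h₂).choose)
  rw [← Fc_natural, ← Fc_natural]
  apply keyL' K brep HP
  rw [Wc_comp, Wc_comp, (ex0W' K brep HP k h₁).choose_spec,
    (ex0W' K brep HP k h₂).choose_spec, ← Category.assoc, ← Category.assoc, hcomm]

/-- The glued element of `F(V)` attached to `k : V ⟶ W`. -/
noncomputable def betaEl (brep : IsPullback b ((ySh K).map e) φ ((ySh K).map (Limits.Sigma.desc f))) (HP : ∀ n, IsPullback (colimit.ι (Yobj K brep) n) (prY K brep n) (qc K brep) (bs f n)) (hcov : Presieve.ofArrows U f ∈ K X) {V : C} (k : V ⟶ colimit (Yobj K brep)) : F.val.obj (op V) :=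
  (((CategoryTheory.isSheaf_iff_isSheaf_of_type _ _).mp F.cond) _
    (SX_mem K hcov (k ≫ qc K brep))).amalgamate (famB K brep HP k) (famB_compat K brep HP k)

lemma beta_spec (brep : IsPullback b ((ySh K).map e) φ ((ySh K).map (Limits.Sigma.desc f))) (HP : ∀ n, IsPullback (colimit.ι (Yobj K brep) n) (prY K brep n) (qc K brep) (bs f n)) (hcov : Presieve.ofArrows U f ∈ K X) {V Z : C} (k : V ⟶ colimit (Yobj K brep)) (g : Z ⟶ V)
    (hg : (SX f (k ≫ qc K brep)).arrows g) (s : Z ⟶ Ydef K brep (nn 0))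
    (hs : Wc K brep (nn 0) s = g ≫ k) :
    F.val.map g.op (betaEl K brep HP hcov k) = Fc K brep (nn 0) s := by
  have hamal := (((CategoryTheory.isSheaf_iff_isSheaf_of_type _ _).mp F.cond) _
    (SX_mem K hcov (k ≫ qc K brep))).valid_glue (famB_compat K brep HP k) g hg
  have h2 : famB K brep HP k g hg = Fc K brep (nn 0) s := by
    apply keyL' K brep HP
    rw [(ex0W' K brep HP k hg).choose_spec, hs]
  exact hamal.trans h2

lemma beta_unique (brep : IsPullback b ((ySh K).map e) φ ((ySh K).map (Limits.Sigma.desc f))) (HP : ∀ n, IsPullback (colimit.ι (Yobj K brep) n) (prY K brep n) (qc K brep) (bs f n)) (hcov : Presieve.ofArrows U f ∈ K X) {V : C} (k : V ⟶ colimit (Yobj K brep)) (t : F.val.obj (op V))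
    (ht : ∀ {Z : C} (g : Z ⟶ V), (SX f (k ≫ qc K brep)).arrows g →
      ∀ (s : Z ⟶ Ydef K brep (nn 0)), Wc K brep (nn 0) s = g ≫ k →
        F.val.map g.op t = Fc K brep (nn 0) s) :
    t = betaEl K brep HP hcov k := by
  apply (((CategoryTheory.isSheaf_iff_isSheaf_of_type _ _).mp F.cond) _
    (SX_mem K hcov (k ≫ qc K brep))).isSeparatedFor.ext
  intro Z g hg
  obtain ⟨s0, hs0⟩ := ex0W' K brep HP k hg
  rw [ht g hg s0 hs0, beta_spec K brep HP hcov k g hg s0 hs0]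

lemma phi_beta (brep : IsPullback b ((ySh K).map e) φ ((ySh K).map (Limits.Sigma.desc f))) (HP : ∀ n, IsPullback (colimit.ι (Yobj K brep) n) (prY K brep n) (qc K brep) (bs f n)) (hcov : Presieve.ofArrows U f ∈ K X) {V : C} (k : V ⟶ colimit (Yobj K brep)) :
    φ.hom.app (op V) (betaEl K brep HP hcov k) = k ≫ qc K brep := by
  apply (((CategoryTheory.isSheaf_iff_isSheaf_of_type _ _).mp
    ((ySh K).obj X).cond) _ (SX_mem K hcov (k ≫ qc K brep))).isSeparatedFor.ext
  intro Z g hg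
  obtain ⟨s0, hs0⟩ := ex0W' K brep HP k hg
  show g ≫ φ.hom.app (op V) (betaEl K brep HP hcov k) = g ≫ k ≫ qc K brep
  rw [← phi_map, beta_spec K brep HP hcov k g hg s0 hs0, phi_Fc]
  show s0 ≫ prY K brep (nn 0) ≫ bs f (nn 0) = g ≫ k ≫ qc K brep
  have hs0' : s0 ≫ colimit.ι (Yobj K brep) (nn 0) = g ≫ k := hs0
  rw [← colι_qc, ← Category.assoc, hs0', Category.assoc]

lemma beta_alpha (brep : IsPullback b ((ySh K).map e) φ ((ySh K).map (Limits.Sigma.desc f))) (HP : ∀ n, IsPullback (colimit.ι (Yobj K brep) n) (prY K brep n) (qc K brep) (bs f n)) (hcov : Presieve.ofArrows U f ∈ K X) {V : C} (t : F.val.obj (op V)) :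
    betaEl K brep HP hcov (alphaEl K brep HP hcov t) = t := by
  have hq : alphaEl K brep HP hcov t ≫ qc K brep = φ.hom.app (op V) t :=
    phi_alpha K brep HP hcov t
  refine (beta_unique K brep HP hcov _ t ?_).symm
  intro Z g hg s hs
  have hg' : (SX f (φ.hom.app (op V) t)).arrows g := by rwa [hq] at hg
  obtain ⟨s0, hs0⟩ := ex0' K brep t hg'
  have h1 : g ≫ alphaEl K brep HP hcov t = Wc K brep (nn 0) s0 :=
    alpha_spec K brep HP hcov t g hg' s0 hs0
  have h2 : Fc K brep (nn 0) s = Fc K brep (nn 0) s0 :=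
    keyL' K brep HP _ _ (by rw [hs, h1])
  rw [h2, hs0]

lemma alpha_beta (brep : IsPullback b ((ySh K).map e) φ ((ySh K).map (Limits.Sigma.desc f))) (HP : ∀ n, IsPullback (colimit.ι (Yobj K brep) n) (prY K brep n) (qc K brep) (bs f n)) (hcov : Presieve.ofArrows U f ∈ K X) {V : C} (k : V ⟶ colimit (Yobj K brep)) :
    alphaEl K brep HP hcov (betaEl K brep HP hcov k) = k := by
  have hq : φ.hom.app (op V) (betaEl K brep HP hcov k) = k ≫ qc K brep :=
    phi_beta K brep HP hcov k
  refine (alpha_unique K brep HP hcov _ k ?_).symm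
  intro Z g hg s hs
  have hg' : (SX f (k ≫ qc K brep)).arrows g := by rwa [hq] at hg
  obtain ⟨s0, hs0⟩ := ex0W' K brep HP k hg'
  have h1 : F.val.map g.op (betaEl K brep HP hcov k) = Fc K brep (nn 0) s0 :=
    beta_spec K brep HP hcov k g hg' s0 hs0
  have h2 : Wc K brep (nn 0) s = Wc K brep (nn 0) s0 :=
    keyL K brep HP _ _ (by rw [hs, h1])
  rw [h2, hs0]

end Glue

lemma SX_pull {V' V Z : C} (x : V ⟶ X) (r : V' ⟶ V) (g : Z ⟶ V')
    (hg : (SX f (r ≫ x)).arrows g) : (SX f x).arrows (g ≫ r) := by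
  have : (Sieve.generate (Presieve.ofArrows U f)).arrows (g ≫ r ≫ x) := hg
  rw [← Category.assoc] at this
  exact this

lemma alpha_natural (brep : IsPullback b ((ySh K).map e) φ ((ySh K).map (Limits.Sigma.desc f))) (HP : ∀ n, IsPullback (colimit.ι (Yobj K brep) n) (prY K brep n) (qc K brep) (bs f n)) (hcov : Presieve.ofArrows U f ∈ K X) {V V' : C} (r : V' ⟶ V) (t : F.val.obj (op V)) :
    alphaEl K brep HP hcov (F.val.map r.op t) = r ≫ alphaEl K brep HP hcov t := by
  refine (alpha_unique K brep HP hcov _ _ ?_).symm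
  intro Z g hg s hs
  have hg2 : (SX f (φ.hom.app (op V) t)).arrows (g ≫ r) := by
    rw [phi_map] at hg
    exact SX_pull _ r g hg
  have hs2 : Fc K brep (nn 0) s = F.val.map ((g ≫ r) : Z ⟶ V).op t := by
    rw [op_comp, FunctorToTypes.map_comp_apply, ← hs]
  have h := alpha_spec K brep HP hcov t (g ≫ r) hg2 s hs2
  rw [← Category.assoc]
  exact h

lemma beta_natural (brep : IsPullback b ((ySh K).map e) φ ((ySh K).map (Limits.Sigma.desc f))) (HP : ∀ n, IsPullback (colimit.ι (Yobj K brep) n) (prY K brep n) (qc K brep) (bs f n)) (hcov : Presieve.ofArrows U f ∈ K X) {V V' : C} (r : V' ⟶ V) (k : V ⟶ colimit (Yobj K brep)) :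
    betaEl K brep HP hcov (r ≫ k) = F.val.map r.op (betaEl K brep HP hcov k) := by
  refine (beta_unique K brep HP hcov _ _ ?_).symm
  intro Z g hg s hs
  have hg2 : (SX f (k ≫ qc K brep)).arrows (g ≫ r) := by
    have h0 : (SX f ((r ≫ k) ≫ qc K brep)).arrows g := hg
    rw [Category.assoc] at h0
    exact SX_pull _ r g h0
  have hs2 : Wc K brep (nn 0) s = (g ≫ r) ≫ k := by rw [hs, Category.assoc]
  have h := beta_spec K brep HP hcov k (g ≫ r) hg2 s hs2
  rw [← FunctorToTypes.map_comp_apply, ← op_comp]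
  exact h

/-- The natural transformation `F ⟶ y(W)`. -/
noncomputable def alphaNat (brep : IsPullback b ((ySh K).map e) φ ((ySh K).map (Limits.Sigma.desc f))) (HP : ∀ n, IsPullback (colimit.ι (Yobj K brep) n) (prY K brep n) (qc K brep) (bs f n)) (hcov : Presieve.ofArrows U f ∈ K X) :
    F.val ⟶ ((ySh K).obj (colimit (Yobj K brep))).val where
  app V := TypeCat.ofHom fun t => alphaEl K brep HP hcov (V := V.unop) t
  naturality V V' r := by
    ext t
    exact alpha_natural K brep HP hcov r.unop t

/-- The natural transformation `y(W) ⟶ F`. -/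
noncomputable def betaNat (brep : IsPullback b ((ySh K).map e) φ ((ySh K).map (Limits.Sigma.desc f))) (HP : ∀ n, IsPullback (colimit.ι (Yobj K brep) n) (prY K brep n) (qc K brep) (bs f n)) (hcov : Presieve.ofArrows U f ∈ K X) :
    ((ySh K).obj (colimit (Yobj K brep))).val ⟶ F.val where
  app V := TypeCat.ofHom fun k => betaEl K brep HP hcov (V := V.unop) k
  naturality V V' r := by
    ext k
    exact beta_natural K brep HP hcov r.unop k

/-- The isomorphism `F ≅ y(W)`. -/
noncomputable def finalIso (brep : IsPullback b ((ySh K).map e) φ ((ySh K).map (Limits.Sigma.desc f))) (HP : ∀ n, IsPullback (colimit.ι (Yobj K brep) n) (prY K brep n) (qc K brep) (bs f n)) (hcov : Presieve.ofArrows U f ∈ K X) :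
    F ≅ (ySh K).obj (colimit (Yobj K brep)) :=
  (fullyFaithfulSheafToPresheaf _ _).preimageIso
    { hom := alphaNat K brep HP hcov
      inv := betaNat K brep HP hcov
      hom_inv_id := by
        apply NatTrans.ext
        ext V t
        exact beta_alpha K brep HP hcov t
      inv_hom_id := by
        apply NatTrans.ext
        ext V k
        exact alpha_beta K brep HP hcov k }

end WithHP
end Core
end CechDescentAux

open CechDescentAux in
theorem representables_closed_under_descent_of_cechDescent
    {C : Type u} [SmallCategory C] [HasFiniteWidePullbacks C] [HasFiniteCoproducts C]
    [HasColimitsOfShape SimplexCategoryᵒᵖ C]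
    (K : Pretopology C) [(K.toGrothendieck).Subcanonical]
    -- (1) every covering family admits a finite covering subfamily
    (hfin : ∀ (X : C) (ι : Type u) (U : ι → C) (f : ∀ i, U i ⟶ X),
      Presieve.ofArrows U f ∈ K X →
      ∃ s : Set ι, s.Finite ∧
        Presieve.ofArrows (fun i : s => U i) (fun i : s => f i) ∈ K X)
    -- (2) for finite families, `∐ yUᵢ ⟶ y(∐ Uᵢ)` is an isomorphism of sheaves
    (hcoprod : ∀ (ι : Type u) [Finite ι] (U : ι → C),
      IsIso (Limits.Sigma.desc (fun i => (K.toGrothendieck).yoneda.map (Limits.Sigma.ι U i))))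
    -- (3) Čech nerves of covering families satisfy the co-cartesian descent condition
    (hdesc : ∀ (X : C) (ι : Type u) (U : ι → C) [HasCoproduct U] (f : ∀ i, U i ⟶ X),
      Presieve.ofArrows U f ∈ K X →
      ∀ (Y : SimplicialObject C)
        (p : Y ⟶ (Arrow.mk (Limits.Sigma.desc f : (∐ U) ⟶ X)).augmentedCechNerve.left),
        -- `p` is co-cartesian: every naturality square is a pullback
        (∀ ⦃m n : SimplexCategoryᵒᵖ⦄ (α : m ⟶ n),
          IsPullback (Y.map α) (p.app m) (p.app n)
            ((Arrow.mk (Limits.Sigma.desc f : (∐ U) ⟶ X)).augmentedCechNerve.left.map α)) →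
        -- then `|Y| ×_X (Čech nerve)ₙ ≅ Yₙ` for every `n`
        ∀ (q : colimit Y ⟶ X),
          (∀ k, colimit.ι Y k ≫ q =
            p.app k ≫ (Arrow.mk (Limits.Sigma.desc f : (∐ U) ⟶ X)).augmentedCechNerve.hom.app k) →
          ∀ n : SimplexCategoryᵒᵖ,
            IsPullback (colimit.ι Y n) (p.app n) q
              ((Arrow.mk (Limits.Sigma.desc f : (∐ U) ⟶ X)).augmentedCechNerve.hom.app n)) :
    -- conclusion: representable sheaves are closed under `K`-descent
    ∀ (F : Sheaf (K.toGrothendieck) (Type u)) (X : C)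
      (φ : F ⟶ (K.toGrothendieck).yoneda.obj X)
      (ι : Type u) (U : ι → C) (f : ∀ i, U i ⟶ X),
      Presieve.ofArrows U f ∈ K X →
      (∀ i, ∃ W : C,
        Nonempty (pullback φ ((K.toGrothendieck).yoneda.map (f i)) ≅
          (K.toGrothendieck).yoneda.obj W)) →
      ∃ W : C, Nonempty (F ≅ (K.toGrothendieck).yoneda.obj W) := by
  intro F X φ ι U f hcov hrep
  obtain ⟨s, hsfin, hscov⟩ := hfin X ι U f hcov
  haveI : Finite ↥s := hsfin.to_subtype
  obtain ⟨W₀, e, b, brep⟩ := exists_brep K φ (fun i : s => f i)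
      (fun i => hrep i) (fun V => hcoprod ↥s V)
  have HP : ∀ n, IsPullback (colimit.ι (Yobj K brep) n) (prY K brep n) (qc K brep)
      (bs (fun i : s => f i) n) := by
    intro n
    exact hdesc X (↥s) (fun i : s => U i) (fun i : s => f i) hscov (Yobj K brep)
      (pY K brep) (fun m n α => cocart K brep α) (qc K brep) (fun k => colι_qc K brep k) n
  exact ⟨colimit (Yobj K brep), ⟨finalIso K brep HP hscov⟩⟩
end

section
/- Let C be a category with pullbacks and J a subcanonical Grothendieck topology on C generated by a pretopology τ. Assume representable sheaves are closed under τ-descent: for every sheaf of types G on (C, J), every object Z of C, every morphism G → yZ, and every τ-covering family {V_k → Z} such that each pullback G ×_{yZ} yV_k is representable, the sheaf G is representable. Let F be a sheaf of types on (C, J) admitting a family of morphisms {u_i : yU_i → F}_{i∈I} with U_i ∈ C such that: (a) the induced morphism ∐_{i∈I} yU_i → F is an epimorphism of sheaves, and (b) for every i ∈ I, every object X of C, and every morphism yX → F, the pullback yU_i ×_F yX in Sh(C, J) is representable. Then the diagonal of F is representable: for all objects X, Y of C and all morphisms yX → F and yY → F, the pullback yX ×_F yY in Sh(C, J) is representable.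 (This is the bottom level of the paper's proposition that, when the affine objects are closed under τ-descent, a stack admitting an n-atlas is automatically n-geometric.) -/
/-!
STATEMENT 4: Let `(C, J)` be a subcanonical site with topology generated by a
pretopology `K`, such that representable sheaves are closed under `K`-descent.
If a sheaf of types `F` admits a family `{u i : yU i ⟶ F}` which is jointly
epimorphic (the induced map from the coproduct is an epimorphism of sheaves)
and whose members are representable morphisms (all pullbacks `yU i ×_F yX` are
representable), then the diagonal of `F` is representable: all pullbacks
`yX ×_F yY` of representables over `F` are representable.
-/

open CategoryTheory CategoryTheory.Limits

universe u

/-- Shortcut instance: type class search no longer finds colimits in `Sheaf J (Type u)`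
in reasonable time (it finds the same Mathlib instance, `Sheaf.instHasColimitsOfSize`). -/
instance sheafTypeHasColimitsOfSize {C : Type u} [SmallCategory C] (J : GrothendieckTopology C) :
    HasColimitsOfSize.{u, u} (Sheaf J (Type u)) :=
  @Sheaf.instHasColimitsOfSize C _ J (Type u) _ inferInstance inferInstance

open Opposite

/-- The sieve of arrows along which `x : yX ⟶ F` factors through some `u i`. -/
def factorSieve {C : Type u} [SmallCategory C]
    (J : GrothendieckTopology C) [J.Subcanonical]
    (F : Sheaf J (Type u)) {ι : Type u} (U : ι → C)
    (u : ∀ i, J.yoneda.obj (U i) ⟶ F)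
    (X : C) (x : J.yoneda.obj X ⟶ F) : Sieve X where
  arrows V f := ∃ (i : ι) (h : V ⟶ U i), J.yoneda.map f ≫ x = J.yoneda.map h ≫ u i
  downward_closed := by
    rintro V W f ⟨i, h, hh⟩ g
    exact ⟨i, g ≫ h, by
      rw [Functor.map_comp, Functor.map_comp, Category.assoc, hh, Category.assoc]⟩

theorem factorSieve_mem {C : Type u} [SmallCategory C]
    (J : GrothendieckTopology C) [J.Subcanonical]
    (F : Sheaf J (Type u)) {ι : Type u} (U : ι → C)
    (u : ∀ i, J.yoneda.obj (U i) ⟶ F) (hepi : Epi (Limits.Sigma.desc u))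
    (X : C) (x : J.yoneda.obj X ⟶ F) :
    factorSieve J F U u X x ∈ J X := by
  classical
  let Ps : ι → (Cᵒᵖ ⥤ Type u) := fun i => yoneda.obj (U i)
  let Sh : ι → Sheaf J (Type u) := fun i => J.yoneda.obj (U i)
  let L := presheafToSheaf J (Type u)
  let adj := sheafificationAdjunction J (Type u)
  -- the comparison map from the presheaf coproduct
  let c : (∐ Ps) ⟶ (∐ Sh).val := Limits.Sigma.desc fun i => (Sigma.ι Sh i).hom
  let m : L.obj (∐ Ps) ⟶ ∐ Sh := (adj.homEquiv (∐ Ps) (∐ Sh)).symm c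
  have hc : c = CategoryTheory.toSheafify J (∐ Ps) ≫ m.hom := by
    have := (adj.homEquiv (∐ Ps) (∐ Sh)).apply_symm_apply c
    rw [← this, Adjunction.homEquiv_unit]
    rfl
  have hm : sigmaComparison L Ps ≫ m = Limits.Sigma.map fun i => adj.counit.app (Sh i) := by
    apply Sigma.hom_ext
    intro i
    have h4 : Sigma.ι (fun b => L.obj (Ps b)) i ≫ Limits.Sigma.map (fun j => adj.counit.app (Sh j)) =
        adj.counit.app (Sh i) ≫ Sigma.ι Sh i := by simp
    rw [ι_comp_sigmaComparison_assoc, h4]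
    have h1 : L.map (Sigma.ι Ps i) ≫ m = (adj.homEquiv _ _).symm (Sigma.ι Ps i ≫ c) :=
      (adj.homEquiv_naturality_left_symm _ _).symm
    have h2 : Sigma.ι Ps i ≫ c = (Sigma.ι Sh i).hom := by simp [c]
    have h3 : (adj.homEquiv (Ps i) (∐ Sh)).symm ((Sigma.ι Sh i).hom) =
        adj.counit.app (Sh i) ≫ Sigma.ι Sh i := by
      rw [Adjunction.homEquiv_counit]
      exact adj.counit.naturality (Sigma.ι Sh i)
    rw [h1, h2, h3]
  haveI : IsIso (sigmaComparison L Ps ≫ m) := by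
    rw [hm]; infer_instance
  haveI : IsIso m := IsIso.of_isIso_comp_left (sigmaComparison L Ps) m
  haveI : Presheaf.IsLocallySurjective J m.hom :=
    (inferInstance : Sheaf.IsLocallySurjective m)
  haveI hcs : Presheaf.IsLocallySurjective J c := by
    rw [hc]; infer_instance
  haveI : Sheaf.IsLocallySurjective (Limits.Sigma.desc u) :=
    (Sheaf.isLocallySurjective_iff_epi _).mpr hepi
  let d : (∐ Ps) ⟶ F.val := c ≫ (Limits.Sigma.desc u).hom
  haveI : Presheaf.IsLocallySurjective J d := by
    have : Presheaf.IsLocallySurjective J ((Limits.Sigma.desc u).hom) :=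
      (inferInstance : Sheaf.IsLocallySurjective (Limits.Sigma.desc u))
    infer_instance
  have hmem := Presheaf.imageSieve_mem J d (J.yonedaEquiv x)
  refine J.superset_covering ?_ hmem
  rintro V f ⟨t, ht⟩
  -- decompose `t` into a component of the coproduct
  obtain ⟨⟨i⟩, h, hih⟩ := Types.jointly_surjective _
    (isColimitOfPreserves ((evaluation Cᵒᵖ (Type u)).obj (op V))
      (colimit.isColimit (Discrete.functor Ps))) t
  have hud : Sigma.ι Ps i ≫ d = (u i).hom := by
    have h2 : Sigma.ι Ps i ≫ c = (Sigma.ι Sh i).hom := by simp [c]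
    rw [show d = c ≫ (Limits.Sigma.desc u).hom from rfl, ← Category.assoc, h2,
      ← ObjectProperty.FullSubcategory.comp_hom, colimit.ι_desc]
    rfl
  have ht' : (u i).hom.app (op V) h = F.val.map f.op (J.yonedaEquiv x) := by
    calc (u i).hom.app (op V) h
        = d.app (op V) ((Sigma.ι Ps i).app (op V) h) := by
          rw [← hud]; rfl
      _ = d.app (op V) t := by
          rw [show (Sigma.ι Ps i).app (op V) h = t from hih]
      _ = F.val.map f.op (J.yonedaEquiv x) := ht
  refine ⟨i, h, ?_⟩
  apply J.yonedaEquiv.injective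
  have l1 : J.yonedaEquiv (J.yoneda.map f ≫ x) = F.val.map f.op (J.yonedaEquiv x) :=
    (J.yonedaEquiv_naturality x f).symm
  have l2 : J.yonedaEquiv (J.yoneda.map h ≫ u i) = (u i).hom.app (op V) h := by
    rw [J.yonedaEquiv_comp, J.yonedaEquiv_yoneda_map]
  rw [l1, l2, ht']

theorem diagonal_representable_of_atlas
    {C : Type u} [SmallCategory C] [HasPullbacks C]
    (K : Pretopology C) [(K.toGrothendieck).Subcanonical]
    -- representable sheaves are closed under `K`-descent
    (hdescent : ∀ (G : Sheaf (K.toGrothendieck) (Type u)) (Z : C)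
      (φ : G ⟶ (K.toGrothendieck).yoneda.obj Z)
      (κ : Type u) (V : κ → C) (g : ∀ k, V k ⟶ Z),
      Presieve.ofArrows V g ∈ K Z →
      (∀ k, ∃ W : C,
        Nonempty ((pullback φ ((K.toGrothendieck).yoneda.map (g k))) ≅
          (K.toGrothendieck).yoneda.obj W)) →
      ∃ W : C, Nonempty (G ≅ (K.toGrothendieck).yoneda.obj W))
    (F : Sheaf (K.toGrothendieck) (Type u))
    {ι : Type u} (U : ι → C) (u : ∀ i, (K.toGrothendieck).yoneda.obj (U i) ⟶ F)
    -- (a) the family is jointly epimorphic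
    (hepi : Epi (Limits.Sigma.desc u))
    -- (b) each `u i` is a representable morphism
    (hrep : ∀ (i : ι) (X : C) (x : (K.toGrothendieck).yoneda.obj X ⟶ F),
      ∃ W : C, Nonempty (pullback (u i) x ≅ (K.toGrothendieck).yoneda.obj W)) :
    ∀ (X Y : C) (x : (K.toGrothendieck).yoneda.obj X ⟶ F)
      (y : (K.toGrothendieck).yoneda.obj Y ⟶ F),
      ∃ W : C, Nonempty (pullback x y ≅ (K.toGrothendieck).yoneda.obj W) := by
  intro X Y x y
  let J := K.toGrothendieck
  -- the Yoneda embedding into sheaves preserves limits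
  haveI : PreservesLimitsOfSize.{0, 0} (J.yoneda ⋙ sheafToPresheaf J (Type u)) :=
    preservesLimits_of_natIso (J.yonedaCompSheafToPresheaf).symm
  haveI hYpres : PreservesLimitsOfSize.{0, 0} J.yoneda :=
    preservesLimits_of_reflects_of_preserves J.yoneda (sheafToPresheaf J (Type u))
  -- the covering sieve over which `x` factors through the atlas
  have hS : factorSieve J F U u X x ∈ J X := factorSieve_mem J F U u hepi X x
  obtain ⟨R, hR, hle⟩ := hS
  let κ : Type u := Σ (V : C), { f : V ⟶ X // R f }
  let V : κ → C := fun k => k.1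
  let g : ∀ k, V k ⟶ X := fun k => k.2.1
  have hVg : Presieve.ofArrows V g = R := by
    funext W
    ext f
    constructor
    · rintro ⟨k⟩
      exact k.2.2
    · intro hf
      exact Presieve.ofArrows.mk (⟨W, f, hf⟩ : κ)
  refine hdescent (pullback x y) X (pullback.fst x y) κ V g (by rw [hVg]; exact hR) ?_
  intro k
  have hfk : factorSieve J F U u X x (g k) := hle _ (g k) k.2.2
  obtain ⟨i, h, heq⟩ := hfk
  obtain ⟨W, ⟨e⟩⟩ := hrep i Y y
  -- the map `yW ⟶ yU i` obtained from the first projection of the pullback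
  let p' : W ⟶ U i := J.yonedaEquiv (e.inv ≫ pullback.fst (u i) y)
  have hp : J.yoneda.map p' = e.inv ≫ pullback.fst (u i) y := by
    apply J.yonedaEquiv.injective
    rw [J.yonedaEquiv_yoneda_map]
  refine ⟨pullback h p', ⟨?_⟩⟩
  calc pullback (pullback.fst x y) (J.yoneda.map (g k))
      ≅ pullback (J.yoneda.map (g k)) (pullback.fst x y) := pullbackSymmetry _ _
    _ ≅ pullback (J.yoneda.map (g k) ≫ x) y := pullbackRightPullbackFstIso x y _
    _ ≅ pullback (J.yoneda.map h ≫ u i) y := pullback.congrHom heq rfl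
    _ ≅ pullback (J.yoneda.map h) (pullback.fst (u i) y) :=
        (pullbackRightPullbackFstIso (u i) y (J.yoneda.map h)).symm
    _ ≅ pullback (J.yoneda.map h) (J.yoneda.map p') :=
        asIso (pullback.map _ _ _ _ (𝟙 _) e.hom (𝟙 _) (by simp)
          (by rw [hp]; simp))
    _ ≅ J.yoneda.obj (pullback h p') := (PreservesPullback.iso J.yoneda h p').symm
end

section
/- Let R be a commutative ring, A a commutative R-algebra, and B a commutative A-algebra which is formally smooth over A (every A-algebra homomorphism from B to a quotient of a commutative A-algebra by a square-zero ideal lifts along the quotient map). Let M be an A-module and let d : A → M be an R-linear derivation. Then there exists an R-linear derivation D : B → B ⊗_A M such that D(algebraMap A B a) = 1 ⊗ d(a) for all a ∈ A, where B ⊗_A M carries its natural B-module structure. (This is the discrete instance of the paper's lemma that a derivation d ∈ π₀(Der(A, M)) lifts along a formally smooth morphism A → B to a derivation d′ ∈ π₀(Der(B, M ⊗_A B)).) -/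
/-!
STATEMENT 8: If `B` is a formally smooth commutative `A`-algebra (in a tower of
commutative rings `R → A → B`), then every `R`-linear derivation `d : A → M`
into an `A`-module `M` lifts to an `R`-linear derivation `D : B → B ⊗[A] M`
with `D (algebraMap A B a) = 1 ⊗ₜ d a` for all `a : A`.
-/

open TensorProduct

universe u

theorem derivation_lift_of_formallySmooth
    (R A B : Type u)
    [CommRing R] [CommRing A] [CommRing B]
    [Algebra R A] [Algebra A B] [Algebra R B] [IsScalarTower R A B]
    [Algebra.FormallySmooth A B]
    (M : Type u) [AddCommGroup M] [Module A M] [Module R M] [IsScalarTower R A M]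
    (d : Derivation R A M) :
    ∃ D : Derivation R B (B ⊗[A] M),
      ∀ a : A, D (algebraMap A B a) = (1 : B) ⊗ₜ[A] d a := by
  set T := TrivSqZeroExt B (B ⊗[A] M) with hT
  -- the twisted algebra structure on T over A
  let φ : A →+* T :=
  { toFun := fun a => (algebraMap A B a, (1 : B) ⊗ₜ[A] d a)
    map_one' := by
      refine TrivSqZeroExt.ext ?_ ?_
      · show algebraMap A B 1 = TrivSqZeroExt.fst 1
        rw [map_one, TrivSqZeroExt.fst_one]
      · show (1:B) ⊗ₜ[A] d 1 = TrivSqZeroExt.snd 1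
        rw [d.map_one_eq_zero, tmul_zero, TrivSqZeroExt.snd_one]
    map_mul' := fun a b => by
      refine TrivSqZeroExt.ext ?_ ?_
      · show algebraMap A B (a * b) = algebraMap A B a * algebraMap A B b
        rw [map_mul]
      · show (1:B) ⊗ₜ[A] d (a * b) = algebraMap A B a • ((1:B) ⊗ₜ[A] d b)
          + MulOpposite.op (algebraMap A B b) • ((1:B) ⊗ₜ[A] d a)
        rw [op_smul_eq_smul, Derivation.leibniz, tmul_add, algebraMap_smul, algebraMap_smul,
          tmul_smul, tmul_smul]
    map_zero' := by
      refine TrivSqZeroExt.ext ?_ ?_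
      · show algebraMap A B 0 = TrivSqZeroExt.fst 0
        rw [map_zero, TrivSqZeroExt.fst_zero]
      · show (1:B) ⊗ₜ[A] d 0 = TrivSqZeroExt.snd 0
        rw [map_zero, tmul_zero, TrivSqZeroExt.snd_zero]
    map_add' := fun a b => by
      refine TrivSqZeroExt.ext ?_ ?_
      · show algebraMap A B (a + b) = algebraMap A B a + algebraMap A B b
        rw [map_add]
      · show (1:B) ⊗ₜ[A] d (a + b) = (1:B) ⊗ₜ[A] d a + (1:B) ⊗ₜ[A] d b
        rw [map_add, tmul_add] }
  letI : Algebra A T := φ.toAlgebra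
  let g : T →ₐ[A] B :=
  { toFun := TrivSqZeroExt.fst
    map_one' := rfl
    map_mul' := fun _ _ => rfl
    map_zero' := rfl
    map_add' := fun _ _ => rfl
    commutes' := fun _ => rfl }
  have hsurj : Function.Surjective g := fun b => ⟨TrivSqZeroExt.inl b, rfl⟩
  have hker : RingHom.ker (g : T →+* B) ^ 2 = ⊥ := by
    rw [pow_two, eq_bot_iff]
    refine Ideal.mul_le.mpr fun x hx y hy => ?_
    have hx' : TrivSqZeroExt.fst x = 0 := hx
    have hy' : TrivSqZeroExt.fst y = 0 := hy
    have hxy : x * y = 0 := by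
      refine TrivSqZeroExt.ext ?_ ?_
      · rw [TrivSqZeroExt.fst_mul, hx', zero_mul, TrivSqZeroExt.fst_zero]
      · rw [TrivSqZeroExt.snd_mul, hx', hy', TrivSqZeroExt.snd_zero, zero_smul,
          zero_add, MulOpposite.op_zero, zero_smul]
    rw [hxy]
    exact Ideal.zero_mem ⊥
  have hnil : IsNilpotent (RingHom.ker (g : T →+* B)) := ⟨2, hker⟩
  let σ : B →ₐ[A] T :=
    Algebra.FormallySmooth.liftOfSurjective (AlgHom.id A B) g hsurj hnil
  have hfst : ∀ b : B, TrivSqZeroExt.fst (σ b) = b := fun b =>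
    Algebra.FormallySmooth.liftOfSurjective_apply (AlgHom.id A B) g hsurj hnil b
  have hcomm : ∀ a : A, σ (algebraMap A B a) = φ a := fun a => σ.commutes a
  have hRmap : ∀ r : R, σ (algebraMap R B r) = TrivSqZeroExt.inl (algebraMap R B r) := by
    intro r
    rw [IsScalarTower.algebraMap_apply R A B r, hcomm]
    refine TrivSqZeroExt.ext ?_ ?_
    · rw [TrivSqZeroExt.fst_inl]
      rfl
    · rw [TrivSqZeroExt.snd_inl]
      show (1:B) ⊗ₜ[A] d (algebraMap R A r) = 0
      rw [Derivation.map_algebraMap, tmul_zero]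
  refine ⟨{ toFun := fun b => TrivSqZeroExt.snd (σ b)
            map_add' := fun x y => by
              show TrivSqZeroExt.snd (σ (x + y)) = _
              rw [map_add, TrivSqZeroExt.snd_add]
            map_smul' := fun r b => by
              show TrivSqZeroExt.snd (σ (r • b)) = r • TrivSqZeroExt.snd (σ b)
              rw [Algebra.smul_def, map_mul, hRmap, TrivSqZeroExt.snd_mul,
                TrivSqZeroExt.fst_inl, TrivSqZeroExt.snd_inl, smul_zero, add_zero,
                algebraMap_smul]
            map_one_eq_zero' := by
              show TrivSqZeroExt.snd (σ 1) = 0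
              rw [map_one, TrivSqZeroExt.snd_one]
            leibniz' := fun x y => by
              show TrivSqZeroExt.snd (σ (x * y)) = _
              rw [map_mul, TrivSqZeroExt.snd_mul, hfst, hfst, op_smul_eq_smul]
              rfl }, ?_⟩
  intro a
  show TrivSqZeroExt.snd (σ (algebraMap A B a)) = (1:B) ⊗ₜ[A] d a
  rw [hcomm]
  rfl
end
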